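/- Let n be a positive integer and let P1d, P1i, P2d, P2i be n×n real symmetric positive semidefinite matrices. For w ∈ (0,1) define P₁(w) = (1/w)·P1d + P1i, P₂(w) = (1/(1−w))·P2d + P2i, and P(w) = (P₁(w)⁻¹ + P₂(w)⁻¹)⁻¹. Assume P₁(w) and P₂(w) are positive definite for every w ∈ (0,1). Then for every w ∈ (0,1), the second derivative of the function w ↦ log det(P(w)) at w is nonnegative. -/

import Mathlib

open Matrix Set Finset
open scoped MatrixOrder

set_option linter.unusedSectionVars false
set_option maxHeartbeats 1600000

section Aux
variable {m : Type*} [Fintype m] [DecidableEq m]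

lemma real_symm {A : Matrix m m ℝ} (hA : A.IsHermitian) : Aᵀ = A := by
  exact (Matrix.isHermitian_iff_isSymm.mp hA).eq

lemma quad_nonneg {A : Matrix m m ℝ} (hA : A.PosSemidef) (x : m → ℝ) :
    0 ≤ x ⬝ᵥ A *ᵥ x := by simpa using hA.dotProduct_mulVec_nonneg x

lemma quad_symm {A : Matrix m m ℝ} (hA : A.IsHermitian) (x y : m → ℝ) :
    x ⬝ᵥ A *ᵥ y = y ⬝ᵥ A *ᵥ x := by
  rw [Matrix.dotProduct_mulVec, ← Matrix.mulVec_transpose, real_symm hA, dotProduct_comm]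

lemma quad_sq {A : Matrix m m ℝ} (hA : A.PosSemidef) (x y : m → ℝ) :
    x ⬝ᵥ A *ᵥ y = (CFC.sqrt A *ᵥ x) ⬝ᵥ (CFC.sqrt A *ᵥ y) := by
  conv_lhs => rw [← CFC.sqrt_mul_sqrt_self A hA.nonneg]
  rw [← Matrix.mulVec_mulVec, Matrix.dotProduct_mulVec, ← Matrix.mulVec_transpose,
    real_symm (CFC.sqrt_nonneg A).posSemidef.1]

lemma quad_cs {A : Matrix m m ℝ} (hA : A.PosSemidef) (x y : m → ℝ) :
    (x ⬝ᵥ A *ᵥ y) ^ 2 ≤ (x ⬝ᵥ A *ᵥ x) * (y ⬝ᵥ A *ᵥ y) := by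
  rw [quad_sq hA x y, quad_sq hA x x, quad_sq hA y y]
  simpa [dotProduct, sq] using
    Finset.sum_mul_sq_le_sq_mul_sq Finset.univ (CFC.sqrt A *ᵥ x) (CFC.sqrt A *ᵥ y)

/-- supporting-hyperplane inequality for the inverse quadratic form -/
lemma inv_quad_ge {M : Matrix m m ℝ} (hM : M.PosDef) (x y : m → ℝ) :
    2 * (x ⬝ᵥ y) - y ⬝ᵥ M *ᵥ y ≤ x ⬝ᵥ M⁻¹ *ᵥ x := by
  have hdet : IsUnit M.det := isUnit_iff_ne_zero.mpr hM.det_pos.ne'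
  have hMiherm : (M⁻¹).IsHermitian := hM.1.inv
  have h0 := quad_nonneg hM.posSemidef (y - M⁻¹ *ᵥ x)
  have hMx : M *ᵥ (M⁻¹ *ᵥ x) = x := by
    rw [Matrix.mulVec_mulVec, Matrix.mul_nonsing_inv _ hdet, Matrix.one_mulVec]
  have hexp : (y - M⁻¹ *ᵥ x) ⬝ᵥ M *ᵥ (y - M⁻¹ *ᵥ x)
      = y ⬝ᵥ M *ᵥ y - 2 * (x ⬝ᵥ y) + x ⬝ᵥ M⁻¹ *ᵥ x := by
    rw [Matrix.mulVec_sub, sub_dotProduct, dotProduct_sub, dotProduct_sub,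
      hMx]
    have h1 : (M⁻¹ *ᵥ x) ⬝ᵥ M *ᵥ y = y ⬝ᵥ M *ᵥ (M⁻¹ *ᵥ x) := quad_symm hM.1 _ y
    have h2 : (M⁻¹ *ᵥ x) ⬝ᵥ x = x ⬝ᵥ M⁻¹ *ᵥ x := dotProduct_comm _ _
    have h3 : y ⬝ᵥ x = x ⬝ᵥ y := dotProduct_comm _ _
    rw [h1, hMx, h2, h3]
    ring
  rw [hexp] at h0
  linarith

lemma scalar_cs {w₁ w₂ a b q₁ q₂ c : ℝ} (hw₁ : 0 < w₁) (hw₂ : 0 < w₂) (ha : 0 ≤ a) (hb : 0 ≤ b)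
    (hab : a + b = 1) (hq₁ : 0 ≤ q₁) (hq₂ : 0 ≤ q₂) (hc : c ^ 2 ≤ q₁ * q₂) :
    (a ^ 2 * q₁ + 2 * (a * b) * c + b ^ 2 * q₂) / (a * w₁ + b * w₂)
      ≤ a * (q₁ / w₁) + b * (q₂ / w₂) := by
  have hw : 0 < a * w₁ + b * w₂ := by
    rcases ha.lt_or_eq with h | h
    · have h1 : 0 < a * w₁ := mul_pos h hw₁
      have h2 : 0 ≤ b * w₂ := mul_nonneg hb hw₂.le
      linarith
    · have hb1 : b = 1 := by linarith
      rw [← h, hb1]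
      simpa using hw₂
  rw [div_le_iff₀ hw]
  have key : 2 * (c * (w₁ * w₂)) ≤ q₁ * w₂ ^ 2 + q₂ * w₁ ^ 2 := by
    have hs : 0 ≤ q₁ * w₂ ^ 2 := mul_nonneg hq₁ (sq_nonneg _)
    have ht : 0 ≤ q₂ * w₁ ^ 2 := mul_nonneg hq₂ (sq_nonneg _)
    rcases le_or_gt (c * (w₁ * w₂)) 0 with h | h
    · linarith
    · have hst : (c * (w₁ * w₂)) ^ 2 ≤ (q₁ * w₂ ^ 2) * (q₂ * w₁ ^ 2) := by
        nlinarith [sq_nonneg (w₁ * w₂)]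
      have h1 : c * (w₁ * w₂) ≤ Real.sqrt ((q₁ * w₂ ^ 2) * (q₂ * w₁ ^ 2)) := by
        rw [show c * (w₁ * w₂) = Real.sqrt ((c * (w₁ * w₂)) ^ 2) from (Real.sqrt_sq h.le).symm]
        exact Real.sqrt_le_sqrt hst
      have h2 : Real.sqrt ((q₁ * w₂ ^ 2) * (q₂ * w₁ ^ 2))
          ≤ (q₁ * w₂ ^ 2 + q₂ * w₁ ^ 2) / 2 := by
        have h3 : Real.sqrt ((q₁ * w₂ ^ 2) * (q₂ * w₁ ^ 2))
            ≤ Real.sqrt (((q₁ * w₂ ^ 2 + q₂ * w₁ ^ 2) / 2) ^ 2) :=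
          Real.sqrt_le_sqrt (by nlinarith [sq_nonneg (q₁ * w₂ ^ 2 - q₂ * w₁ ^ 2)])
        rwa [Real.sqrt_sq (by linarith)] at h3
      linarith
  have e1 : a * (q₁ / w₁) * w₁ = a * q₁ := by field_simp
  have e2 : b * (q₂ / w₂) * w₂ = b * q₂ := by field_simp
  have expand : (a * (q₁ / w₁) + b * (q₂ / w₂)) * (a * w₁ + b * w₂)
      = a ^ 2 * q₁ + b ^ 2 * q₂ + a * b * ((q₁ / w₁) * w₂ + (q₂ / w₂) * w₁) := by
    field_simp
    ring
  rw [expand]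
  have hdiv : 2 * c ≤ (q₁ / w₁) * w₂ + (q₂ / w₂) * w₁ := by
    rw [div_mul_eq_mul_div, div_mul_eq_mul_div, div_add_div _ _ hw₁.ne' hw₂.ne',
      le_div_iff₀ (mul_pos hw₁ hw₂)]
    nlinarith [key]
  nlinarith [mul_le_mul_of_nonneg_left hdiv (mul_nonneg ha hb)]

lemma quad_decomp {A B : Matrix m m ℝ} (t : ℝ) (y z : m → ℝ) :
    y ⬝ᵥ (t • A + B) *ᵥ z = t * (y ⬝ᵥ A *ᵥ z) + y ⬝ᵥ B *ᵥ z := by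
  simp [Matrix.add_mulVec, Matrix.smul_mulVec, dotProduct_add,
    dotProduct_smul, smul_eq_mul]

lemma quad_expand {C : Matrix m m ℝ} (hC : C.IsHermitian) (a b : ℝ) (y₁ y₂ : m → ℝ) :
    (a • y₁ + b • y₂) ⬝ᵥ C *ᵥ (a • y₁ + b • y₂)
      = a ^ 2 * (y₁ ⬝ᵥ C *ᵥ y₁) + 2 * (a * b) * (y₁ ⬝ᵥ C *ᵥ y₂)
        + b ^ 2 * (y₂ ⬝ᵥ C *ᵥ y₂) := by
  have hsym := quad_symm hC y₂ y₁
  simp only [Matrix.mulVec_add, Matrix.mulVec_smul, add_dotProduct,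
    dotProduct_add, smul_dotProduct, dotProduct_smul, smul_eq_mul]
  rw [hsym]
  ring

lemma quad_sub_expand {C : Matrix m m ℝ} (hC : C.IsHermitian) (y₁ y₂ : m → ℝ) :
    (y₁ - y₂) ⬝ᵥ C *ᵥ (y₁ - y₂)
      = (y₁ ⬝ᵥ C *ᵥ y₁) - 2 * (y₁ ⬝ᵥ C *ᵥ y₂) + (y₂ ⬝ᵥ C *ᵥ y₂) := by
  have hsym := quad_symm hC y₂ y₁
  simp only [Matrix.mulVec_sub, sub_dotProduct, dotProduct_sub]
  rw [hsym]
  ring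

lemma harmonic_concave {A B : Matrix m m ℝ} {w₁ w₂ a b : ℝ}
    (hw₁ : 0 < w₁) (hw₂ : 0 < w₂) (ha : 0 ≤ a) (hb : 0 ≤ b) (hab : a + b = 1)
    (hA : A.PosSemidef) (hB : B.PosSemidef)
    (h1 : ((1 / w₁) • A + B).PosDef) (h2 : ((1 / w₂) • A + B).PosDef)
    (hm : ((1 / (a * w₁ + b * w₂)) • A + B).PosDef) (x : m → ℝ) :
    a * (x ⬝ᵥ ((1 / w₁) • A + B)⁻¹ *ᵥ x) + b * (x ⬝ᵥ ((1 / w₂) • A + B)⁻¹ *ᵥ x)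
      ≤ x ⬝ᵥ ((1 / (a * w₁ + b * w₂)) • A + B)⁻¹ *ᵥ x := by
  set M₁ := (1 / w₁) • A + B with hM₁
  set M₂ := (1 / w₂) • A + B with hM₂
  set Mm := (1 / (a * w₁ + b * w₂)) • A + B with hMm
  set y₁ := M₁⁻¹ *ᵥ x with hy₁
  set y₂ := M₂⁻¹ *ᵥ x with hy₂
  set yb := a • y₁ + b • y₂ with hyb
  have hd1 : IsUnit M₁.det := isUnit_iff_ne_zero.mpr h1.det_pos.ne'
  have hd2 : IsUnit M₂.det := isUnit_iff_ne_zero.mpr h2.det_pos.ne'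
  have hMy₁ : M₁ *ᵥ y₁ = x := by
    rw [hy₁, Matrix.mulVec_mulVec, Matrix.mul_nonsing_inv _ hd1, Matrix.one_mulVec]
  have hMy₂ : M₂ *ᵥ y₂ = x := by
    rw [hy₂, Matrix.mulVec_mulVec, Matrix.mul_nonsing_inv _ hd2, Matrix.one_mulVec]
  have step1 := inv_quad_ge hm x yb
  have hxyb : x ⬝ᵥ yb = a * (x ⬝ᵥ y₁) + b * (x ⬝ᵥ y₂) := by
    simp [hyb, dotProduct_add, dotProduct_smul, smul_eq_mul]
  have hself1 : y₁ ⬝ᵥ M₁ *ᵥ y₁ = x ⬝ᵥ y₁ := by rw [hMy₁, dotProduct_comm]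
  have hself2 : y₂ ⬝ᵥ M₂ *ᵥ y₂ = x ⬝ᵥ y₂ := by rw [hMy₂, dotProduct_comm]
  -- quadratic form values
  have hqA1 : 0 ≤ y₁ ⬝ᵥ A *ᵥ y₁ := quad_nonneg hA y₁
  have hqA2 : 0 ≤ y₂ ⬝ᵥ A *ᵥ y₂ := quad_nonneg hA y₂
  have hcs : (y₁ ⬝ᵥ A *ᵥ y₂) ^ 2 ≤ (y₁ ⬝ᵥ A *ᵥ y₁) * (y₂ ⬝ᵥ A *ᵥ y₂) := quad_cs hA y₁ y₂
  -- expansion of the middle quadratic form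
  have hMmexp : yb ⬝ᵥ Mm *ᵥ yb = (1 / (a * w₁ + b * w₂)) * (yb ⬝ᵥ A *ᵥ yb) + yb ⬝ᵥ B *ᵥ yb :=
    quad_decomp _ _ _
  have hEA := quad_expand hA.1 a b y₁ y₂
  have hEB := quad_expand hB.1 a b y₁ y₂
  -- A part
  have hApart : (1 / (a * w₁ + b * w₂)) * (yb ⬝ᵥ A *ᵥ yb)
      ≤ a * ((y₁ ⬝ᵥ A *ᵥ y₁) / w₁) + b * ((y₂ ⬝ᵥ A *ᵥ y₂) / w₂) := by
    rw [hEA, one_div, inv_mul_eq_div]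
    exact scalar_cs hw₁ hw₂ ha hb hab hqA1 hqA2 hcs
  -- B part
  have hBpart : yb ⬝ᵥ B *ᵥ yb ≤ a * (y₁ ⬝ᵥ B *ᵥ y₁) + b * (y₂ ⬝ᵥ B *ᵥ y₂) := by
    have hdiff := quad_nonneg hB (y₁ - y₂)
    rw [quad_sub_expand hB.1] at hdiff
    rw [hEB]
    have hb' : b = 1 - a := by linarith
    subst hb'
    nlinarith [mul_nonneg (mul_nonneg ha hb) hdiff]
  -- self decomposition
  have hdec1 : y₁ ⬝ᵥ M₁ *ᵥ y₁ = (1 / w₁) * (y₁ ⬝ᵥ A *ᵥ y₁) + y₁ ⬝ᵥ B *ᵥ y₁ := quad_decomp _ _ _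
  have hdec2 : y₂ ⬝ᵥ M₂ *ᵥ y₂ = (1 / w₂) * (y₂ ⬝ᵥ A *ᵥ y₂) + y₂ ⬝ᵥ B *ᵥ y₂ := quad_decomp _ _ _
  have e1 : (1 / w₁) * (y₁ ⬝ᵥ A *ᵥ y₁) = (y₁ ⬝ᵥ A *ᵥ y₁) / w₁ := by ring
  have e2 : (1 / w₂) * (y₂ ⬝ᵥ A *ᵥ y₂) = (y₂ ⬝ᵥ A *ᵥ y₂) / w₂ := by ring
  have c1 : a * (x ⬝ᵥ y₁) = a * ((y₁ ⬝ᵥ A *ᵥ y₁) / w₁) + a * (y₁ ⬝ᵥ B *ᵥ y₁) := by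
    rw [← hself1, hdec1, e1]; ring
  have c2 : b * (x ⬝ᵥ y₂) = b * ((y₂ ⬝ᵥ A *ᵥ y₂) / w₂) + b * (y₂ ⬝ᵥ B *ᵥ y₂) := by
    rw [← hself2, hdec2, e2]; ring
  have hx1 : x ⬝ᵥ M₁⁻¹ *ᵥ x = x ⬝ᵥ y₁ := rfl
  have hx2 : x ⬝ᵥ M₂⁻¹ *ᵥ x = x ⬝ᵥ y₂ := rfl
  rw [hx1, hx2]
  linarith [step1, hxyb, hMmexp, hApart, hBpart, c1, c2]


lemma det_smul_one_add_smul {A : Matrix m m ℝ} (hA : A.IsHermitian) (a b : ℝ) :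
    (a • (1 : Matrix m m ℝ) + b • A).det = ∏ i, (a + b * hA.eigenvalues i) := by
  have key : a • (1 : Matrix m m ℝ) + b • A =
      (hA.eigenvectorUnitary : Matrix m m ℝ) * (Matrix.diagonal (fun i => a + b * hA.eigenvalues i))
        * (star hA.eigenvectorUnitary : Matrix m m ℝ) := by
    have hdiag : Matrix.diagonal (fun i => a + b * hA.eigenvalues i)
        = a • (1 : Matrix m m ℝ) + b • Matrix.diagonal hA.eigenvalues := by
      ext i j
      by_cases h : i = j <;> simp [Matrix.diagonal, Matrix.one_apply, h]
    rw [hdiag]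
    conv_lhs => rw [hA.spectral_theorem]
    simp only [Matrix.mul_add, Matrix.add_mul, Matrix.mul_smul, Matrix.smul_mul, mul_one]
    rw [(Matrix.mem_unitaryGroup_iff).mp hA.eigenvectorUnitary.2]
    simp [RCLike.ofReal_real_eq_id]
  rw [key, Matrix.det_mul, Matrix.det_mul, mul_comm, ← mul_assoc, ← Matrix.det_mul,
    (Matrix.mem_unitaryGroup_iff').mp hA.eigenvectorUnitary.2, Matrix.det_one, one_mul,
    Matrix.det_diagonal]


variable {X Y : Matrix m m ℝ}

lemma sqrt_det_isUnit (hX : X.PosDef) : IsUnit (CFC.sqrt X).det := by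
  rw [isUnit_iff_ne_zero]
  intro h
  have := hX.det_pos
  rw [← CFC.sqrt_mul_sqrt_self X hX.posSemidef.nonneg, Matrix.det_mul, h, mul_zero] at this
  exact lt_irrefl 0 this

lemma det_le_det_of_sub_psd (hX : X.PosDef) (hXY : (Y - X).PosSemidef) : X.det ≤ Y.det := by
  set S := CFC.sqrt X with hSdef
  have hSS : S * S = X := CFC.sqrt_mul_sqrt_self X hX.posSemidef.nonneg
  have hSherm : S.IsHermitian := (CFC.sqrt_nonneg X).posSemidef.1
  have hdS : IsUnit S.det := sqrt_det_isUnit hX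
  have hSiherm : (S⁻¹).IsHermitian := hSherm.inv
  set T := S⁻¹ * (Y - X) * S⁻¹ with hT
  have hTpsd : T.PosSemidef := by
    have := hXY.mul_mul_conjTranspose_same (S⁻¹)
    rwa [hSiherm.eq] at this
  have hY : Y = S * (1 + T) * S := by
    rw [hT, Matrix.mul_add, Matrix.mul_one, Matrix.add_mul, hSS]
    rw [← Matrix.mul_assoc, ← Matrix.mul_assoc, Matrix.mul_nonsing_inv _ hdS, Matrix.one_mul,
      Matrix.mul_assoc (Y - X), Matrix.nonsing_inv_mul _ hdS, Matrix.mul_one]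
    abel
  have hdet : Y.det = X.det * (1 + T).det := by
    rw [hY, Matrix.det_mul, Matrix.det_mul, ← hSS, Matrix.det_mul]
    ring
  have hprod : (1 + T).det = ∏ i, (1 + 1 * hTpsd.1.eigenvalues i) := by
    rw [← det_smul_one_add_smul hTpsd.1 1 1, one_smul, one_smul]
  have h1 : (1 : ℝ) ≤ (1 + T).det := by
    rw [hprod]
    calc (1 : ℝ) = ∏ _i : m, (1 : ℝ) := by simp
    _ ≤ ∏ i, (1 + 1 * hTpsd.1.eigenvalues i) := by
        refine Finset.prod_le_prod (fun i _ => zero_le_one) fun i _ => ?_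
        have := hTpsd.eigenvalues_nonneg i
        linarith
  calc X.det = X.det * 1 := by ring
  _ ≤ X.det * (1 + T).det := by
      exact mul_le_mul_of_nonneg_left h1 hX.det_pos.le
  _ = Y.det := hdet.symm

lemma conj_posDef (hY : Y.PosDef) {S : Matrix m m ℝ} (hS : S.IsHermitian) (hdS : IsUnit S.det) :
    (S⁻¹ * Y * S⁻¹).PosDef := by
  have hSiherm : (S⁻¹).IsHermitian := hS.inv
  refine Matrix.PosDef.of_dotProduct_mulVec_pos ?_ ?_
  · have : (S⁻¹ * Y * S⁻¹)ᴴ = (S⁻¹)ᴴ * Yᴴ * (S⁻¹)ᴴ := by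
      rw [Matrix.conjTranspose_mul, Matrix.conjTranspose_mul, Matrix.mul_assoc]
    rw [Matrix.IsHermitian, this, hSiherm.eq, hY.1.eq]
  · intro x hx
    have hxs : S⁻¹ *ᵥ x ≠ 0 := by
      intro h
      apply hx
      have : (S * S⁻¹) *ᵥ x = S *ᵥ (S⁻¹ *ᵥ x) := (Matrix.mulVec_mulVec _ _ _).symm
      rw [Matrix.mul_nonsing_inv _ hdS, Matrix.one_mulVec, h, Matrix.mulVec_zero] at this
      exact this
    have key : star x ⬝ᵥ (S⁻¹ * Y * S⁻¹) *ᵥ x = star (S⁻¹ *ᵥ x) ⬝ᵥ Y *ᵥ (S⁻¹ *ᵥ x) := by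
      have hsymm : S⁻¹ᵀ = S⁻¹ := real_symm hSiherm
      simp only [star_trivial, ← Matrix.mulVec_mulVec]
      rw [Matrix.dotProduct_mulVec x (S⁻¹), ← Matrix.mulVec_transpose, hsymm]
    rw [key]
    exact hY.dotProduct_mulVec_pos hxs

lemma log_det_concave (hX : X.PosDef) (hY : Y.PosDef) {a b : ℝ}
    (ha : 0 ≤ a) (hb : 0 ≤ b) (hab : a + b = 1) :
    a * Real.log X.det + b * Real.log Y.det ≤ Real.log (a • X + b • Y).det := by
  set S := CFC.sqrt X with hSdef
  have hSS : S * S = X := CFC.sqrt_mul_sqrt_self X hX.posSemidef.nonneg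
  have hSherm : S.IsHermitian := (CFC.sqrt_nonneg X).posSemidef.1
  have hdS : IsUnit S.det := sqrt_det_isUnit hX
  set T := S⁻¹ * Y * S⁻¹ with hT
  have hTpd : T.PosDef := conj_posDef hY hSherm hdS
  have hmid : S * T * S = Y := by
    rw [hT]
    simp only [Matrix.mul_assoc]
    rw [Matrix.nonsing_inv_mul _ hdS, Matrix.mul_one, ← Matrix.mul_assoc,
      Matrix.mul_nonsing_inv _ hdS, Matrix.one_mul]
  have hconj : a • X + b • Y = S * (a • (1 : Matrix m m ℝ) + b • T) * S := by
    have hexp : S * (a • (1 : Matrix m m ℝ) + b • T) * S = a • (S * 1 * S) + b • (S * T * S) := by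
      simp only [Matrix.mul_add, Matrix.add_mul, Matrix.mul_smul, Matrix.smul_mul]
    rw [hexp, Matrix.mul_one, hSS, hmid]
  have hdetT : T.det = Y.det / X.det := by
    rw [hT, Matrix.det_mul, Matrix.det_mul, Matrix.det_nonsing_inv, Ring.inverse_eq_inv', ← hSS,
      Matrix.det_mul]
    field_simp
  have heig : ∀ i, 0 < hTpd.1.eigenvalues i := hTpd.eigenvalues_pos
  have hfac : ∀ i, (hTpd.1.eigenvalues i) ^ b ≤ a + b * hTpd.1.eigenvalues i := by
    intro i
    have := Real.geom_mean_le_arith_mean2_weighted ha hb zero_le_one (heig i).le hab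
    simpa using this
  have hfacpos : ∀ i, 0 < a + b * hTpd.1.eigenvalues i := fun i =>
    lt_of_lt_of_le (Real.rpow_pos_of_pos (heig i) b) (hfac i)
  have hdet2 : (a • X + b • Y).det = X.det * ∏ i, (a + b * hTpd.1.eigenvalues i) := by
    rw [hconj, Matrix.det_mul, Matrix.det_mul, det_smul_one_add_smul hTpd.1, ← hSS,
      Matrix.det_mul]
    ring
  have hprodpos : 0 < ∏ i, (a + b * hTpd.1.eigenvalues i) :=
    Finset.prod_pos fun i _ => hfacpos i
  rw [hdet2, Real.log_mul hX.det_pos.ne' hprodpos.ne', Real.log_prod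
    (fun i _ => (hfacpos i).ne')]
  have hsum : ∑ i, b * Real.log (hTpd.1.eigenvalues i) ≤
      ∑ i, Real.log (a + b * hTpd.1.eigenvalues i) := by
    refine Finset.sum_le_sum fun i _ => ?_
    calc b * Real.log (hTpd.1.eigenvalues i) = Real.log ((hTpd.1.eigenvalues i) ^ b) :=
          (Real.log_rpow (heig i) b).symm
    _ ≤ Real.log (a + b * hTpd.1.eigenvalues i) :=
          Real.log_le_log (Real.rpow_pos_of_pos (heig i) b) (hfac i)
  have hlogT : ∑ i, Real.log (hTpd.1.eigenvalues i) = Real.log Y.det - Real.log X.det := by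
    rw [← Real.log_prod (fun i _ => (heig i).ne')]
    have : ∏ i, hTpd.1.eigenvalues i = T.det := by
      simpa using hTpd.1.det_eq_prod_eigenvalues.symm
    rw [this, hdetT, Real.log_div hY.det_pos.ne' hX.det_pos.ne']
  have : ∑ i, b * Real.log (hTpd.1.eigenvalues i) = b * (Real.log Y.det - Real.log X.det) := by
    rw [← Finset.mul_sum, hlogT]
  rw [this] at hsum
  have h3 : a * Real.log X.det + b * Real.log X.det = Real.log X.det := by
    rw [← add_mul, hab, one_mul]
  linarith [hsum]



lemma posDef_smul {M : Matrix m m ℝ} (hM : M.PosDef) {a : ℝ} (ha : 0 < a) :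
    (a • M).PosDef := by
  refine Matrix.PosDef.of_dotProduct_mulVec_pos ?_ ?_
  · rw [Matrix.IsHermitian, Matrix.conjTranspose_smul, hM.1.eq]
    simp
  · intro x hx
    rw [Matrix.smul_mulVec, dotProduct_smul, smul_eq_mul]
    exact mul_pos ha (hM.dotProduct_mulVec_pos hx)

lemma posSemidef_smul {M : Matrix m m ℝ} (hM : M.PosSemidef) {a : ℝ} (ha : 0 ≤ a) :
    (a • M).PosSemidef := by
  refine Matrix.PosSemidef.of_dotProduct_mulVec_nonneg ?_ ?_
  · rw [Matrix.IsHermitian, Matrix.conjTranspose_smul, hM.1.eq]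
    simp
  · intro x
    rw [Matrix.smul_mulVec, dotProduct_smul, smul_eq_mul]
    exact mul_nonneg ha (hM.dotProduct_mulVec_nonneg x)

lemma convex_comb_posDef {X Y : Matrix m m ℝ} (hX : X.PosDef) (hY : Y.PosDef) {a b : ℝ}
    (ha : 0 ≤ a) (hb : 0 ≤ b) (hab : a + b = 1) : (a • X + b • Y).PosDef := by
  rcases ha.lt_or_eq with h | h
  · exact (posDef_smul hX h).add_posSemidef (posSemidef_smul hY.posSemidef hb)
  · have hb1 : b = 1 := by linarith
    rw [← h, hb1]
    simpa using hY

lemma differentiableAt_det_comp {f : ℝ → Matrix m m ℝ} {w : ℝ}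
    (h : ∀ i j, DifferentiableAt ℝ (fun z => f z i j) w) :
    DifferentiableAt ℝ (fun z => (f z).det) w := by
  simp only [Matrix.det_apply']
  apply DifferentiableAt.fun_sum
  intro σ _
  exact DifferentiableAt.const_mul (DifferentiableAt.fun_finsetProd fun i _ => h _ _) _

lemma deriv_nonneg_of_monotoneOn {g : ℝ → ℝ} {w : ℝ} {s : Set ℝ}
    (hs : s ∈ nhds w) (hg : MonotoneOn g s) : 0 ≤ deriv g w := by
  by_cases H : DifferentiableAt ℝ g w
  · have hd := H.hasDerivAt
    rw [hasDerivAt_iff_tendsto_slope] at hd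
    refine ge_of_tendsto hd ?_
    have hmem : s ∩ {w}ᶜ ∈ nhdsWithin w {w}ᶜ :=
      Filter.inter_mem (nhdsWithin_le_nhds hs) self_mem_nhdsWithin
    filter_upwards [hmem] with z hz
    rcases hz with ⟨hzs, hzw⟩
    have hws : w ∈ s := mem_of_mem_nhds hs
    rcases lt_or_gt_of_ne (show z ≠ w from hzw) with h | h
    · rw [slope_def_field]
      apply div_nonneg_of_nonpos
      · simpa using hg hzs hws h.le
      · linarith
    · rw [slope_def_field]
      apply div_nonneg
      · simpa using hg hws hzs h.le
      · linarith
  · rw [deriv_zero_of_not_differentiableAt H]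


lemma isHermitian_smul_real {M : Matrix m m ℝ} (h : M.IsHermitian) (a : ℝ) :
    (a • M).IsHermitian := by
  rw [Matrix.IsHermitian, Matrix.conjTranspose_smul, h.eq]
  simp

end Aux


/-- The second derivative of `w ↦ log det P(w)` is nonnegative on `(0,1)`. -/
theorem split_cif_log_det_second_deriv_nonneg (n : ℕ) (hn : 0 < n)
    (P1d P1i P2d P2i : Matrix (Fin n) (Fin n) ℝ)
    (hP1d : P1d.PosSemidef) (hP1i : P1i.PosSemidef)
    (hP2d : P2d.PosSemidef) (hP2i : P2i.PosSemidef)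
    (hpos : ∀ w ∈ Set.Ioo (0 : ℝ) 1,
      ((1 / w) • P1d + P1i).PosDef ∧ ((1 / (1 - w)) • P2d + P2i).PosDef) :
    ∀ w ∈ Set.Ioo (0 : ℝ) 1,
      0 ≤ deriv (deriv (fun x =>
        Real.log ((((1 / x) • P1d + P1i)⁻¹ + ((1 / (1 - x)) • P2d + P2i)⁻¹)⁻¹).det)) w := by
  intro w hw
  set M₁ : ℝ → Matrix (Fin n) (Fin n) ℝ := fun z => (1 / z) • P1d + P1i with hM₁def
  set M₂ : ℝ → Matrix (Fin n) (Fin n) ℝ := fun z => (1 / (1 - z)) • P2d + P2i with hM₂def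
  set Q : ℝ → Matrix (Fin n) (Fin n) ℝ := fun z => (M₁ z)⁻¹ + (M₂ z)⁻¹ with hQdef
  set F : ℝ → ℝ := fun x =>
    Real.log ((((1 / x) • P1d + P1i)⁻¹ + ((1 / (1 - x)) • P2d + P2i)⁻¹)⁻¹).det with hFdef
  set g : ℝ → ℝ := fun z =>
    Real.log ((M₁ z).det) + Real.log ((M₂ z).det) - Real.log ((M₁ z + M₂ z).det) with hgdef
  -- positive definiteness facts
  have h1 : ∀ z ∈ Set.Ioo (0:ℝ) 1, (M₁ z).PosDef := fun z hz => (hpos z hz).1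
  have h2 : ∀ z ∈ Set.Ioo (0:ℝ) 1, (M₂ z).PosDef := fun z hz => (hpos z hz).2
  have hQpd : ∀ z ∈ Set.Ioo (0:ℝ) 1, (Q z).PosDef := fun z hz =>
    ((h1 z hz).inv).add ((h2 z hz).inv)
  have hsum_pd : ∀ z ∈ Set.Ioo (0:ℝ) 1, (M₁ z + M₂ z).PosDef := fun z hz =>
    (h1 z hz).add (h2 z hz)
  -- determinant identity
  have hdetQ : ∀ z ∈ Set.Ioo (0:ℝ) 1,
      (Q z).det = (M₁ z + M₂ z).det * ((M₁ z).det)⁻¹ * ((M₂ z).det)⁻¹ := by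
    intro z hz
    have hd1 : IsUnit (M₁ z).det := isUnit_iff_ne_zero.mpr (h1 z hz).det_pos.ne'
    have hd2 : IsUnit (M₂ z).det := isUnit_iff_ne_zero.mpr (h2 z hz).det_pos.ne'
    have hfac : Q z = (M₁ z)⁻¹ * (M₁ z + M₂ z) * (M₂ z)⁻¹ := by
      rw [Matrix.mul_add, Matrix.nonsing_inv_mul _ hd1, Matrix.add_mul, Matrix.one_mul,
        Matrix.mul_assoc, Matrix.mul_nonsing_inv _ hd2, Matrix.mul_one]
      exact (add_comm _ _)
    rw [hfac, Matrix.det_mul, Matrix.det_mul, Matrix.det_nonsing_inv, Matrix.det_nonsing_inv]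
    simp only [Ring.inverse_eq_inv']
    ring
  -- log identity
  have hlogQ : ∀ z ∈ Set.Ioo (0:ℝ) 1,
      Real.log ((Q z).det) = Real.log ((M₁ z + M₂ z).det) - Real.log ((M₁ z).det)
        - Real.log ((M₂ z).det) := by
    intro z hz
    rw [hdetQ z hz,
      Real.log_mul (mul_ne_zero (hsum_pd z hz).det_pos.ne' (inv_ne_zero (h1 z hz).det_pos.ne'))
        (inv_ne_zero (h2 z hz).det_pos.ne'),
      Real.log_mul (hsum_pd z hz).det_pos.ne' (inv_ne_zero (h1 z hz).det_pos.ne'),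
      Real.log_inv, Real.log_inv]
    ring
  -- F agrees with g on the interval
  have hFg : Set.EqOn F g (Set.Ioo (0:ℝ) 1) := by
    intro z hz
    have hQz : ((Q z)⁻¹).det = ((Q z).det)⁻¹ := by
      rw [Matrix.det_nonsing_inv, Ring.inverse_eq_inv']
    have hFz : F z = Real.log (((Q z)⁻¹).det) := rfl
    rw [hFz, hQz, Real.log_inv, hlogQ z hz]
    simp only [hgdef]
    ring
  -- differentiability of g on the interval
  have hdiffM₁ : ∀ z ∈ Set.Ioo (0:ℝ) 1, ∀ i j,
      DifferentiableAt ℝ (fun y : ℝ => M₁ y i j) z := by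
    intro z hz i j
    have : (fun y : ℝ => M₁ y i j) = fun y : ℝ => (1 / y) * P1d i j + P1i i j := by
      funext y
      simp [hM₁def, Matrix.add_apply, Matrix.smul_apply, smul_eq_mul]
    rw [this]
    exact (((differentiableAt_const 1).div differentiableAt_id hz.1.ne').mul_const
      _).add_const _
  have hdiffM₂ : ∀ z ∈ Set.Ioo (0:ℝ) 1, ∀ i j,
      DifferentiableAt ℝ (fun y : ℝ => M₂ y i j) z := by
    intro z hz i j
    have : (fun y : ℝ => M₂ y i j) = fun y : ℝ => (1 / (1 - y)) * P2d i j + P2i i j := by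
      funext y
      simp [hM₂def, Matrix.add_apply, Matrix.smul_apply, smul_eq_mul]
    rw [this]
    have h1y : (1:ℝ) - z ≠ 0 := by
      have := hz.2
      intro h
      linarith [hz.2]
    exact (((differentiableAt_const 1).div
      ((differentiableAt_const 1).sub differentiableAt_id) h1y).mul_const _).add_const _
  have hgdiff : ∀ z ∈ Set.Ioo (0:ℝ) 1, DifferentiableAt ℝ g z := by
    intro z hz
    have hd1 : DifferentiableAt ℝ (fun y : ℝ => (M₁ y).det) z :=
      differentiableAt_det_comp (hdiffM₁ z hz)
    have hd2 : DifferentiableAt ℝ (fun y : ℝ => (M₂ y).det) z :=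
      differentiableAt_det_comp (hdiffM₂ z hz)
    have hd3 : DifferentiableAt ℝ (fun y : ℝ => (M₁ y + M₂ y).det) z :=
      differentiableAt_det_comp fun i j => by
        have e : (fun y : ℝ => (M₁ y + M₂ y) i j)
            = fun y : ℝ => M₁ y i j + M₂ y i j := by
          funext y; simp [Matrix.add_apply]
        rw [e]
        exact (hdiffM₁ z hz i j).add (hdiffM₂ z hz i j)
    exact ((hd1.log (h1 z hz).det_pos.ne').add (hd2.log (h2 z hz).det_pos.ne')).sub
      (hd3.log (hsum_pd z hz).det_pos.ne')
  -- convexity of g on the interval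
  have hconv : ConvexOn ℝ (Set.Ioo (0:ℝ) 1) g := by
    refine ⟨convex_Ioo 0 1, ?_⟩
    intro w₁ hw₁ w₂ hw₂ a b ha hb hab
    have hwm : a * w₁ + b * w₂ ∈ Set.Ioo (0:ℝ) 1 := by
      have := (convex_Ioo (0:ℝ) 1) hw₁ hw₂ ha hb hab
      simpa [smul_eq_mul] using this
    -- the PSD inequality between Q values
    have hcomb : a * (1 - w₁) + b * (1 - w₂) = 1 - (a * w₁ + b * w₂) := by
      have : a + b = 1 := hab
      nlinarith [hab]
    have hm2 : ((1 / (a * (1 - w₁) + b * (1 - w₂))) • P2d + P2i).PosDef := by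
      rw [hcomb]
      exact (hpos _ hwm).2
    have hpsd : ((Q (a * w₁ + b * w₂)) - (a • Q w₁ + b • Q w₂)).PosSemidef := by
      refine Matrix.PosSemidef.of_dotProduct_mulVec_nonneg ?_ ?_
      · have hherm : ∀ z ∈ Set.Ioo (0:ℝ) 1, (Q z).IsHermitian := fun z hz => (hQpd z hz).1
        exact (hherm _ hwm).sub ((isHermitian_smul_real (hherm _ hw₁) a).add
          (isHermitian_smul_real (hherm _ hw₂) b))
      · intro x
        have hq1 := harmonic_concave hw₁.1 hw₂.1 ha hb hab hP1d hP1i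
          (hpos _ hw₁).1 (hpos _ hw₂).1 (hpos _ hwm).1 x
        have hq2 := harmonic_concave (by linarith [hw₁.2] : (0:ℝ) < 1 - w₁)
          (by linarith [hw₂.2] : (0:ℝ) < 1 - w₂) ha hb hab hP2d hP2i
          (hpos _ hw₁).2 (hpos _ hw₂).2 hm2 x
        rw [hcomb] at hq2
        have hexp : star x ⬝ᵥ ((Q (a * w₁ + b * w₂) - (a • Q w₁ + b • Q w₂)) *ᵥ x)
            = (x ⬝ᵥ (M₁ (a * w₁ + b * w₂))⁻¹ *ᵥ x + x ⬝ᵥ (M₂ (a * w₁ + b * w₂))⁻¹ *ᵥ x)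
              - (a * (x ⬝ᵥ (M₁ w₁)⁻¹ *ᵥ x + x ⬝ᵥ (M₂ w₁)⁻¹ *ᵥ x)
                + b * (x ⬝ᵥ (M₁ w₂)⁻¹ *ᵥ x + x ⬝ᵥ (M₂ w₂)⁻¹ *ᵥ x)) := by
          simp [hQdef, Matrix.sub_mulVec, Matrix.add_mulVec, Matrix.smul_mulVec,
            dotProduct_sub, dotProduct_add, dotProduct_smul,
            smul_eq_mul]
          ring
        rw [hexp]
        have e₁ : M₁ (a * w₁ + b * w₂) = (1 / (a * w₁ + b * w₂)) • P1d + P1i := rfl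
        have e₂ : M₂ (a * w₁ + b * w₂) = (1 / (1 - (a * w₁ + b * w₂))) • P2d + P2i := rfl
        linarith [hq1, hq2]
    -- determinant comparison
    have hRpd : (a • Q w₁ + b • Q w₂).PosDef :=
      convex_comb_posDef (hQpd _ hw₁) (hQpd _ hw₂) ha hb hab
    have hdetle : (a • Q w₁ + b • Q w₂).det ≤ (Q (a * w₁ + b * w₂)).det :=
      det_le_det_of_sub_psd hRpd hpsd
    have hlogle : a * Real.log ((Q w₁).det) + b * Real.log ((Q w₂).det)
        ≤ Real.log ((Q (a * w₁ + b * w₂)).det) := by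
      calc a * Real.log ((Q w₁).det) + b * Real.log ((Q w₂).det)
          ≤ Real.log ((a • Q w₁ + b • Q w₂).det) :=
            log_det_concave (hQpd _ hw₁) (hQpd _ hw₂) ha hb hab
      _ ≤ Real.log ((Q (a * w₁ + b * w₂)).det) :=
            Real.log_le_log hRpd.det_pos hdetle
    -- translate to g
    have hgQ : ∀ z ∈ Set.Ioo (0:ℝ) 1, g z = - Real.log ((Q z).det) := by
      intro z hz
      have := hlogQ z hz
      simp only [hgdef]
      linarith [this]
    have hsm : a • w₁ + b • w₂ = a * w₁ + b * w₂ := by simp [smul_eq_mul]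
    rw [hsm, hgQ _ hwm, hgQ _ hw₁, hgQ _ hw₂]
    simp only [smul_eq_mul]
    linarith [hlogle]
  -- monotonicity of deriv g
  have hmono : MonotoneOn (deriv g) (Set.Ioo (0:ℝ) 1) :=
    hconv.monotoneOn_deriv hgdiff
  -- second derivative of F equals second derivative of g at w
  have hIoo_nhds : Set.Ioo (0:ℝ) 1 ∈ nhds w := isOpen_Ioo.mem_nhds hw
  have hderivEq : Set.EqOn (deriv F) (deriv g) (Set.Ioo (0:ℝ) 1) := by
    intro z hz
    exact Filter.EventuallyEq.deriv_eq
      (Filter.eventuallyEq_of_mem (isOpen_Ioo.mem_nhds hz) hFg)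
  have h2nd : deriv (deriv F) w = deriv (deriv g) w :=
    Filter.EventuallyEq.deriv_eq (Filter.eventuallyEq_of_mem hIoo_nhds hderivEq)
  have hfinal : 0 ≤ deriv (deriv g) w :=
    deriv_nonneg_of_monotoneOn hIoo_nhds hmono
  rw [h2nd]
  exact hfinal
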